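/- Let f ∈ C^{1,1}_L(ℝ^d) be convex with minimizer x⋆ and let x₀,…,x_N be generated by the gradient method x_{i+1} = x_i − (h/L)∇f(x_i) with 0 < h ≤ 1. Then f(x_N) − f(x⋆) ≤ L‖x₀ − x⋆‖²/(4Nh + 2). -/

import Mathlib

open RealInnerProductSpace Finset
set_option maxHeartbeats 2000000

noncomputable def ttf (h : ℝ) (N : ℕ) : ℕ → ℝ := fun i =>
  if i = N then (2*N*h+1)/(N+1)
  else (2*N*h+1)*(2*N+1)/(((2*N:ℝ)-i)*((2*N:ℝ)+1-i))

noncomputable def lamf (h : ℝ) (N : ℕ) : ℕ → ℝ := fun k => ∑ j ∈ Finset.range k, ttf h N j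

section scalar

variable {h : ℝ} {N : ℕ}

lemma cast_lt_of_lt {i : ℕ} (hi : i < N) : (i:ℝ) ≤ (N:ℝ) - 1 := by
  have : (i:ℝ) + 1 ≤ N := by exact_mod_cast Nat.succ_le_of_lt hi
  linarith

lemma den1_pos {i : ℕ} (hi : i < N) : (0:ℝ) < (2*N:ℝ) - i := by
  have h1 : (i:ℝ) < (N:ℝ) := by exact_mod_cast hi
  have h2 : (0:ℝ) ≤ (N:ℝ) := Nat.cast_nonneg N
  linarith

lemma den2_pos {i : ℕ} (hi : i < N) : (0:ℝ) < (2*N:ℝ) + 1 - i := by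
  have := den1_pos hi; linarith

lemma ttf_lt_eq {i : ℕ} (hi : i < N) :
    ttf h N i = (2*N*h+1)*(2*N+1)/(((2*N:ℝ)-i)*((2*N:ℝ)+1-i)) := by
  simp [ttf, Nat.ne_of_lt hi]

lemma ttf_N : ttf h N N = (2*N*h+1)/(N+1) := by simp [ttf]

lemma lam_succ (k : ℕ) : lamf h N (k+1) = lamf h N k + ttf h N k := by
  simp [lamf, Finset.sum_range_succ]

lemma lam_zero : lamf h N 0 = 0 := by simp [lamf]

/-- product form of the closed formula for lamf -/
lemma lam_mul : ∀ k, k ≤ N → lamf h N k * ((2*N:ℝ)+1-k) = (2*N*h+1) * k := by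
  intro k
  induction k with
  | zero => simp [lamf]
  | succ n ih =>
    intro hn
    have hnN : n < N := hn
    have hd1 := den1_pos hnN
    have hd2 := den2_pos hnN
    have hT : ttf h N n * (((2*N:ℝ)-n)*((2*N:ℝ)+1-n)) = (2*N*h+1)*(2*N+1) := by
      rw [ttf_lt_eq hnN]; field_simp
    have ihn := ih hnN.le
    have hcancel : (lamf h N (n+1) * ((2*N:ℝ)+1-(n+1:ℕ))) * ((2*N:ℝ)+1-n)
        = ((2*N*h+1) * (n+1:ℕ)) * ((2*N:ℝ)+1-n) := by
      rw [lam_succ]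
      push_cast
      linear_combination ((2*N:ℝ)-n) * ihn + hT
    exact mul_right_cancel₀ hd2.ne' hcancel

lemma lam_W : lamf h N (N+1) = 2*N*h+1 := by
  have h1 := lam_mul (h := h) (N := N) N le_rfl
  have hN1 : (0:ℝ) < (N:ℝ)+1 := by positivity
  have : lamf h N (N+1) * ((N:ℝ)+1) = (2*N*h+1) * ((N:ℝ)+1) := by
    rw [lam_succ, ttf_N]
    have : ((2*N:ℝ)+1-N) = (N:ℝ)+1 := by push_cast; ring
    rw [this] at h1
    field_simp
    linear_combination h1
  exact mul_right_cancel₀ hN1.ne' this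

lemma hC2 {i : ℕ} (hi : i < N) :
    ttf h N i * ((2*N:ℝ) - i) = (2*N*h+1) + lamf h N i := by
  have hd1 := den1_pos hi
  have hd2 := den2_pos hi
  have hT : ttf h N i * (((2*N:ℝ)-i)*((2*N:ℝ)+1-i)) = (2*N*h+1)*(2*N+1) := by
    rw [ttf_lt_eq hi]; field_simp
  have hlam := lam_mul (h := h) (N := N) i hi.le
  have : (ttf h N i * ((2*N:ℝ) - i)) * ((2*N:ℝ)+1-i)
      = ((2*N*h+1) + lamf h N i) * ((2*N:ℝ)+1-i) := by
    linear_combination hT - hlam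
  exact mul_right_cancel₀ hd2.ne' this

lemma hC2N : lamf h N N = (N:ℝ) * ttf h N N := by
  have h1 := lam_mul (h := h) (N := N) N le_rfl
  have hN1 : (0:ℝ) < (N:ℝ)+1 := by positivity
  have : lamf h N N * ((N:ℝ)+1) = ((N:ℝ) * ttf h N N) * ((N:ℝ)+1) := by
    rw [ttf_N]
    have he : ((2*N:ℝ)+1-N) = (N:ℝ)+1 := by push_cast; ring
    rw [he] at h1
    field_simp
    linear_combination h1
  exact mul_right_cancel₀ hN1.ne' this

lemma tt_ge_h (hh0 : 0 < h) (hh1 : h ≤ 1) : ∀ i, i ≤ N → h ≤ ttf h N i := by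
  intro i hi
  rcases eq_or_lt_of_le hi with heq | hlt
  · subst heq
    rw [ttf_N]
    rw [le_div_iff₀ (by positivity)]
    have hN0 : (0:ℝ) ≤ (i:ℝ) := Nat.cast_nonneg i
    nlinarith
  · rw [ttf_lt_eq hlt]
    have hd1 := den1_pos hlt
    have hd2 := den2_pos hlt
    rw [le_div_iff₀ (by positivity)]
    have hi0 : (0:ℝ) ≤ (i:ℝ) := Nat.cast_nonneg i
    have hN0 : (0:ℝ) ≤ (N:ℝ) := Nat.cast_nonneg N
    have e1 : (2*N:ℝ)-i ≤ 2*N := by linarith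
    have e2 : (2*N:ℝ)+1-i ≤ 2*N+1 := by linarith
    have e3 : ((2*N:ℝ)-i)*((2*N:ℝ)+1-i) ≤ (2*N)*(2*N+1) :=
      mul_le_mul e1 e2 hd2.le (by positivity)
    nlinarith

lemma lam_nonneg (hh0 : 0 < h) (hh1 : h ≤ 1) : ∀ k, k ≤ N+1 → 0 ≤ lamf h N k := by
  intro k hk
  apply Finset.sum_nonneg
  intro j hj
  have hjN : j ≤ N := by
    have := Finset.mem_range.1 hj; omega
  exact le_trans hh0.le (tt_ge_h hh0 hh1 j hjN)

lemma lam_le_W (hh0 : 0 < h) (hh1 : h ≤ 1) : ∀ k, k ≤ N+1 → lamf h N k ≤ 2*N*h+1 := by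
  intro k hk
  rw [← lam_W (h := h) (N := N)]
  apply Finset.sum_le_sum_of_subset_of_nonneg (Finset.range_subset_range.2 hk)
  intro j hj _
  have hjN : j ≤ N := by have := Finset.mem_range.1 hj; omega
  exact le_trans hh0.le (tt_ge_h hh0 hh1 j hjN)

end scalar

section vec

variable {E : Type*} [NormedAddCommGroup E] [InnerProductSpace ℝ E]
variable {L h : ℝ}

noncomputable def Qv (g : ℕ → E) (k : ℕ) : E := ∑ j ∈ Finset.range (k+1), g j

noncomputable def Pv (h : ℝ) (N : ℕ) (g : ℕ → E) (k : ℕ) : E :=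
  ∑ j ∈ Finset.range (k+1), ttf h N j • g j

noncomputable def Sv (h : ℝ) (N : ℕ) (g : ℕ → E) (k : ℕ) : ℝ :=
  ∑ j ∈ Finset.range (k+1), (ttf h N j - h) * ‖g j‖^2

noncomputable def Phi (L h : ℝ) (N : ℕ) (δ : ℕ → ℝ) (g : ℕ → E) (u0 : E) (k : ℕ) : ℝ :=
  lamf h N (k+1) * δ k + L/2 * ‖u0 - L⁻¹ • Pv h N g k‖^2
  + (2*N*h+1 - lamf h N (k+1)) * Sv h N g k / (2*L)
  - h * lamf h N (k+1) * ‖g k‖^2 / (2*L)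

lemma pair_expand {N : ℕ} (x : E) (g : ℕ → E) (k : ℕ) :
    ∑ j ∈ Finset.range (k+1), (ttf h N j - h) * ‖x - g j‖^2
    = (lamf h N (k+1) - ((k:ℝ)+1)*h) * ‖x‖^2
      - 2*(⟪x, Pv h N g k⟫ - h * ⟪x, Qv g k⟫) + Sv h N g k := by
  have h1 : ⟪x, Pv h N g k⟫ = ∑ j ∈ Finset.range (k+1), ttf h N j * ⟪x, g j⟫ := by
    simp [Pv, inner_sum, real_inner_smul_right]
  have h2 : ⟪x, Qv g k⟫ = ∑ j ∈ Finset.range (k+1), ⟪x, g j⟫ := by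
    simp [Qv, inner_sum]
  have h3 : lamf h N (k+1) = ∑ j ∈ Finset.range (k+1), ttf h N j := rfl
  have h4 : ((k:ℝ)+1) * h = ∑ j ∈ Finset.range (k+1), h := by
    rw [Finset.sum_const, Finset.card_range, nsmul_eq_mul]
    push_cast; ring
  rw [h1, h2, h3, h4, Sv]
  rw [← Finset.sum_sub_distrib, Finset.sum_mul, Finset.mul_sum, ← Finset.sum_sub_distrib,
    Finset.mul_sum, ← Finset.sum_sub_distrib, ← Finset.sum_add_distrib]
  apply Finset.sum_congr rfl
  intro j _
  rw [norm_sub_sq_real]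
  ring

lemma step_ineq (hL : 0 < L) (hh0 : 0 < h) (hh1 : h ≤ 1) {N k : ℕ} (hk : k + 1 < N)
    (δ : ℕ → ℝ) (g : ℕ → E) (u0 uk1 : E)
    (huk : uk1 = u0 - (h/L) • Qv g k)
    (hEk : δ (k+1) ≤ δ k - h/L * ⟪g (k+1), g k⟫ - 1/(2*L) * ‖g (k+1) - g k‖^2)
    (hFk : δ (k+1) ≤ ⟪g (k+1), uk1⟫ - 1/(2*L) * ‖g (k+1)‖^2) :
    Phi L h N δ g u0 (k+1) ≤ Phi L h N δ g u0 k := by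
  have hc2 := hC2 (h := h) (i := k+1) hk
  push_cast at hc2
  have e1 : Pv h N g (k+1) = Pv h N g k + ttf h N (k+1) • g (k+1) := by
    simp [Pv, Finset.sum_range_succ]
  have hv : u0 - L⁻¹ • Pv h N g (k+1)
      = (u0 - L⁻¹ • Pv h N g k) - (ttf h N (k+1)/L) • g (k+1) := by
    rw [e1, smul_add, smul_smul, show L⁻¹ * ttf h N (k+1) = ttf h N (k+1)/L by ring]
    abel
  have e2 : ‖u0 - L⁻¹ • Pv h N g (k+1)‖^2
      = ‖u0 - L⁻¹ • Pv h N g k‖^2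
        - 2*(ttf h N (k+1)/L)*(⟪g (k+1), u0⟫ - L⁻¹ * ⟪g (k+1), Pv h N g k⟫)
        + (ttf h N (k+1)/L)^2 * ‖g (k+1)‖^2 := by
    rw [hv, norm_sub_sq_real, real_inner_smul_right, norm_smul, inner_sub_left,
      real_inner_smul_left, Real.norm_eq_abs, mul_pow, sq_abs,
      real_inner_comm u0 (g (k+1)), real_inner_comm (Pv h N g k) (g (k+1))]
    ring
  have e3 : Sv h N g (k+1) = Sv h N g k + (ttf h N (k+1) - h) * ‖g (k+1)‖^2 := by
    simp [Sv, Finset.sum_range_succ]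
  have e4 : ⟪g (k+1), uk1⟫ = ⟪g (k+1), u0⟫ - h/L * ⟪g (k+1), Qv g k⟫ := by
    rw [huk, inner_sub_right, real_inner_smul_right]
  have e5 := pair_expand (h := h) (N := N) (g (k+1)) g k
  have hlam2 : lamf h N (k+2) = lamf h N (k+1) + ttf h N (k+1) := lam_succ (k+1)
  have hTh : h ≤ ttf h N (k+1) := tt_ge_h hh0 hh1 (k+1) hk.le
  have hL0 : 0 ≤ lamf h N (k+1) := lam_nonneg hh0 hh1 (k+1) (by omega)
  have hD1 : (0:ℝ) ≤ ∑ j ∈ Finset.range (k+1), (ttf h N j - h) * ‖g (k+1) - g j‖^2 := by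
    apply Finset.sum_nonneg
    intro j hj
    have hjN : j ≤ N := by have := Finset.mem_range.1 hj; omega
    exact mul_nonneg (sub_nonneg.2 (tt_ge_h hh0 hh1 j hjN)) (sq_nonneg _)
  have e6 : ‖g (k+1) - g k‖^2 = ‖g (k+1)‖^2 - 2*⟪g (k+1), g k⟫ + ‖g k‖^2 :=
    norm_sub_sq_real _ _
  have hΛeq : lamf h N (k+1) = ttf h N (k+1) * (2*(N:ℝ) - ((k:ℝ)+1)) - (2*(N:ℝ)*h+1) := by
    linarith [hc2]
  have key : Phi L h N δ g u0 (k+1) = Phi L h N δ g u0 k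
      + lamf h N (k+1) * (δ (k+1) - (δ k - h/L * ⟪g (k+1), g k⟫ - 1/(2*L) * ‖g (k+1) - g k‖^2))
      + ttf h N (k+1) * (δ (k+1) - (⟪g (k+1), uk1⟫ - 1/(2*L) * ‖g (k+1)‖^2))
      - (ttf h N (k+1) * (∑ j ∈ Finset.range (k+1), (ttf h N j - h) * ‖g (k+1) - g j‖^2)
         + lamf h N (k+1) * (1-h) * ‖g (k+1) - g k‖^2) / (2*L) := by
    simp only [Phi]
    rw [hlam2, e2, e3, e4, e5, e6]
    push_cast
    rw [hΛeq]
    field_simp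
    ring
  have s1 : lamf h N (k+1) * (δ (k+1) - (δ k - h/L * ⟪g (k+1), g k⟫ - 1/(2*L) * ‖g (k+1) - g k‖^2)) ≤ 0 :=
    mul_nonpos_of_nonneg_of_nonpos hL0 (by linarith)
  have s2 : ttf h N (k+1) * (δ (k+1) - (⟪g (k+1), uk1⟫ - 1/(2*L) * ‖g (k+1)‖^2)) ≤ 0 :=
    mul_nonpos_of_nonneg_of_nonpos (le_trans hh0.le hTh) (by linarith)
  have s3 : (0:ℝ) ≤ (ttf h N (k+1) * (∑ j ∈ Finset.range (k+1), (ttf h N j - h) * ‖g (k+1) - g j‖^2)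
         + lamf h N (k+1) * (1-h) * ‖g (k+1) - g k‖^2) / (2*L) := by
    apply div_nonneg _ (by linarith)
    have := mul_nonneg (mul_nonneg hL0 (by linarith : (0:ℝ) ≤ 1 - h)) (sq_nonneg ‖g (k+1) - g k‖)
    have h2 := mul_nonneg (le_trans hh0.le hTh) hD1
    nlinarith [sq_nonneg ‖g (k+1) - g k‖]
  linarith [key, s1, s2, s3]


lemma base_ineq (hL : 0 < L) (hh0 : 0 < h) (hh1 : h ≤ 1) {N : ℕ} (hN : 0 < N)
    (δ : ℕ → ℝ) (g : ℕ → E) (u0 : E)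
    (hF0 : δ 0 ≤ ⟪g 0, u0⟫ - 1/(2*L) * ‖g 0‖^2) :
    Phi L h N δ g u0 0 ≤ L/2 * ‖u0‖^2 := by
  have hc2 := hC2 (h := h) (i := 0) hN
  rw [lam_zero, add_zero] at hc2
  push_cast at hc2
  have hW : (2:ℝ)*N*h+1 = ttf h N 0 * (2*(N:ℝ)) := by linarith
  have e0 : Pv h N g 0 = ttf h N 0 • g 0 := by simp [Pv]
  have eS : Sv h N g 0 = (ttf h N 0 - h) * ‖g 0‖^2 := by simp [Sv]
  have elam : lamf h N 1 = ttf h N 0 := by simp [lamf]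
  have hv0 : u0 - L⁻¹ • Pv h N g 0 = u0 - (ttf h N 0/L) • g 0 := by
    rw [e0, smul_smul, show L⁻¹ * ttf h N 0 = ttf h N 0/L by ring]
  have hT0 : h ≤ ttf h N 0 := tt_ge_h hh0 hh1 0 (by omega)
  have key : Phi L h N δ g u0 0
      = L/2 * ‖u0‖^2 + ttf h N 0 * (δ 0 - (⟪g 0, u0⟫ - 1/(2*L) * ‖g 0‖^2)) := by
    simp only [Phi]
    rw [eS, elam, hv0, norm_sub_sq_real, real_inner_smul_right, norm_smul,
      Real.norm_eq_abs, mul_pow, sq_abs, real_inner_comm u0 (g 0)]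
    norm_num at hc2
    field_simp
    linear_combination (h*‖g 0‖^2) * hc2
  have s2 : ttf h N 0 * (δ 0 - (⟪g 0, u0⟫ - 1/(2*L) * ‖g 0‖^2)) ≤ 0 :=
    mul_nonpos_of_nonneg_of_nonpos (le_trans hh0.le hT0) (by linarith)
  linarith [key, s2]

lemma final_ineq (hL : 0 < L) (hh0 : 0 < h) (hh1 : h ≤ 1) (m : ℕ)
    (δ : ℕ → ℝ) (g : ℕ → E) (u0 um1 : E)
    (hum : um1 = u0 - (h/L) • Qv g m)
    (hEm : δ (m+1) ≤ δ m - h/L * ⟪g (m+1), g m⟫ - 1/(2*L) * ‖g (m+1) - g m‖^2)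
    (hFm : δ (m+1) ≤ ⟪g (m+1), um1⟫ - 1/(2*L) * ‖g (m+1)‖^2) :
    (2*((m:ℝ)+1)*h+1) * δ (m+1) ≤ Phi L h (m+1) δ g u0 m := by
  have hTv : ttf h (m+1) (m+1) = (2*((m:ℝ)+1)*h+1)/((m:ℝ)+2) := by
    rw [ttf_N]; push_cast; ring_nf
  have hm2 : ((m:ℝ)+2) ≠ 0 := by positivity
  have hLv : lamf h (m+1) (m+1) = (2*((m:ℝ)+1)*h+1)*((m:ℝ)+1)/((m:ℝ)+2) := by
    have h1 := lam_mul (h := h) (N := m+1) (m+1) le_rfl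
    push_cast at h1
    rw [eq_div_iff hm2]
    linear_combination h1
  have e1 : Pv h (m+1) g (m+1) = Pv h (m+1) g m + ttf h (m+1) (m+1) • g (m+1) := by
    simp [Pv, Finset.sum_range_succ]
  have hv : u0 - L⁻¹ • Pv h (m+1) g (m+1)
      = (u0 - L⁻¹ • Pv h (m+1) g m) - (ttf h (m+1) (m+1)/L) • g (m+1) := by
    rw [e1, smul_add, smul_smul, show L⁻¹ * ttf h (m+1) (m+1) = ttf h (m+1) (m+1)/L by ring]
    abel
  have e2 : ‖u0 - L⁻¹ • Pv h (m+1) g (m+1)‖^2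
      = ‖u0 - L⁻¹ • Pv h (m+1) g m‖^2
        - 2*(ttf h (m+1) (m+1)/L)*(⟪g (m+1), u0⟫ - L⁻¹ * ⟪g (m+1), Pv h (m+1) g m⟫)
        + (ttf h (m+1) (m+1)/L)^2 * ‖g (m+1)‖^2 := by
    rw [hv, norm_sub_sq_real, real_inner_smul_right, norm_smul, inner_sub_left,
      real_inner_smul_left, Real.norm_eq_abs, mul_pow, sq_abs,
      real_inner_comm u0 (g (m+1)), real_inner_comm (Pv h (m+1) g m) (g (m+1))]
    ring
  have e4 : ⟪g (m+1), um1⟫ = ⟪g (m+1), u0⟫ - h/L * ⟪g (m+1), Qv g m⟫ := by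
    rw [hum, inner_sub_right, real_inner_smul_right]
  have e5 := pair_expand (h := h) (N := m+1) (g (m+1)) g m
  have e6 : ‖g (m+1) - g m‖^2 = ‖g (m+1)‖^2 - 2*⟪g (m+1), g m⟫ + ‖g m‖^2 :=
    norm_sub_sq_real _ _
  have hTh : h ≤ ttf h (m+1) (m+1) := tt_ge_h hh0 hh1 (m+1) le_rfl
  have hL0 : 0 ≤ lamf h (m+1) (m+1) := lam_nonneg hh0 hh1 (m+1) (by omega)
  have hD1 : (0:ℝ) ≤ ∑ j ∈ Finset.range (m+1), (ttf h (m+1) j - h) * ‖g (m+1) - g j‖^2 := by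
    apply Finset.sum_nonneg
    intro j hj
    have hjN : j ≤ m+1 := by have := Finset.mem_range.1 hj; omega
    exact mul_nonneg (sub_nonneg.2 (tt_ge_h hh0 hh1 j hjN)) (sq_nonneg _)
  have key : (2*((m:ℝ)+1)*h+1) * δ (m+1) = Phi L h (m+1) δ g u0 m
      + lamf h (m+1) (m+1) * (δ (m+1) - (δ m - h/L * ⟪g (m+1), g m⟫ - 1/(2*L) * ‖g (m+1) - g m‖^2))
      + ttf h (m+1) (m+1) * (δ (m+1) - (⟪g (m+1), um1⟫ - 1/(2*L) * ‖g (m+1)‖^2))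
      - (L/2 * ‖u0 - L⁻¹ • Pv h (m+1) g (m+1)‖^2
         + (ttf h (m+1) (m+1) * (∑ j ∈ Finset.range (m+1), (ttf h (m+1) j - h) * ‖g (m+1) - g j‖^2)
            + lamf h (m+1) (m+1) * (1-h) * ‖g (m+1) - g m‖^2) / (2*L)) := by
    simp only [Phi]
    rw [e2, e4, e5, e6]
    push_cast
    rw [hTv, hLv]
    field_simp
    ring
  have s1 : lamf h (m+1) (m+1) * (δ (m+1) - (δ m - h/L * ⟪g (m+1), g m⟫ - 1/(2*L) * ‖g (m+1) - g m‖^2)) ≤ 0 :=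
    mul_nonpos_of_nonneg_of_nonpos hL0 (by linarith)
  have s2 : ttf h (m+1) (m+1) * (δ (m+1) - (⟪g (m+1), um1⟫ - 1/(2*L) * ‖g (m+1)‖^2)) ≤ 0 :=
    mul_nonpos_of_nonneg_of_nonpos (le_trans hh0.le hTh) (by linarith)
  have s3 : (0:ℝ) ≤ L/2 * ‖u0 - L⁻¹ • Pv h (m+1) g (m+1)‖^2
         + (ttf h (m+1) (m+1) * (∑ j ∈ Finset.range (m+1), (ttf h (m+1) j - h) * ‖g (m+1) - g j‖^2)
            + lamf h (m+1) (m+1) * (1-h) * ‖g (m+1) - g m‖^2) / (2*L) := by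
    have p1 : (0:ℝ) ≤ L/2 * ‖u0 - L⁻¹ • Pv h (m+1) g (m+1)‖^2 := by positivity
    have p2 := mul_nonneg (le_trans hh0.le hTh) hD1
    have p3 := mul_nonneg (mul_nonneg hL0 (by linarith : (0:ℝ) ≤ 1 - h)) (sq_nonneg ‖g (m+1) - g m‖)
    have : (0:ℝ) ≤ (2*L) := by linarith
    positivity
  linarith [key, s1, s2, s3]

lemma cert (hL : 0 < L) (hh0 : 0 < h) (hh1 : h ≤ 1) {N : ℕ} (hN : 0 < N)
    (δ : ℕ → ℝ) (g : ℕ → E) (u : ℕ → E)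
    (hu : ∀ k, k < N → u (k+1) = u 0 - (h/L) • Qv g k)
    (hE : ∀ i, i < N → δ (i+1) ≤ δ i - h/L * ⟪g (i+1), g i⟫ - 1/(2*L) * ‖g (i+1) - g i‖^2)
    (hF : ∀ i, i ≤ N → δ i ≤ ⟪g i, u i⟫ - 1/(2*L) * ‖g i‖^2) :
    (2*(N:ℝ)*h+1) * δ N ≤ L/2 * ‖u 0‖^2 := by
  obtain ⟨m, rfl⟩ : ∃ m, N = m + 1 := ⟨N-1, by omega⟩
  have mono : ∀ k, k ≤ m → Phi L h (m+1) δ g (u 0) k ≤ L/2 * ‖u 0‖^2 := by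
    intro k
    induction k with
    | zero => intro _; exact base_ineq hL hh0 hh1 (by omega) δ g (u 0) (hF 0 (by omega))
    | succ n ih =>
      intro hn
      have h1 : n + 1 < m + 1 := by omega
      refine le_trans (step_ineq hL hh0 hh1 h1 δ g (u 0) (u (n+1)) (hu n (by omega))
        (hE n (by omega)) (hF (n+1) (by omega))) (ih (by omega))
  have hfin := final_ineq hL hh0 hh1 m δ g (u 0) (u (m+1)) (hu m (by omega))
    (hE m (by omega)) (hF (m+1) le_rfl)
  have := le_trans hfin (mono m le_rfl)
  push_cast
  linarith [this]

end vec

variable {E : Type*} [NormedAddCommGroup E] [InnerProductSpace ℝ E] [CompleteSpace E]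

/-- derivative of f along a line -/
lemma line_hasDerivAt {f : E → ℝ} (hdiff : Differentiable ℝ f) (a v : E) (t : ℝ) :
    HasDerivAt (fun s : ℝ => f (a + s • v)) ⟪gradient f (a + t • v), v⟫ t := by
  have hγ : HasDerivAt (fun s : ℝ => a + s • v) v t := by
    simpa using (((hasDerivAt_id t).smul_const v).const_add a)
  have hf := (hdiff (a + t • v)).hasGradientAt.hasFDerivAt
  have := hf.comp_hasDerivAt t hγ
  simpa [InnerProductSpace.toDual_apply_apply, Function.comp_def] using this

/-- convexity lower bound -/
lemma convex_grad_lower {f : E → ℝ} (hconv : ConvexOn ℝ Set.univ f)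
    (hdiff : Differentiable ℝ f) (a b : E) :
    f a + ⟪gradient f a, b - a⟫ ≤ f b := by
  set ψ : ℝ → ℝ := fun t => f (a + t • (b - a)) with hψ
  have hψconv : ConvexOn ℝ Set.univ ψ := by
    have h := hconv.comp_affineMap (AffineMap.lineMap a b (k := ℝ))
    rw [Set.preimage_univ] at h
    have he : ψ = f ∘ (AffineMap.lineMap a b) := by
      funext t; simp [AffineMap.lineMap_apply, hψ, add_comm]
    rw [he]; exact h
  have hd : HasDerivAt ψ ⟪gradient f a, b - a⟫ 0 := by
    simpa using line_hasDerivAt hdiff a (b - a) 0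
  have := hψconv.le_slope_of_hasDerivAt (Set.mem_univ (0:ℝ)) (Set.mem_univ (1:ℝ)) one_pos hd
  have hs : slope ψ 0 1 = f b - f a := by
    simp [slope, hψ]
  rw [hs] at this
  linarith

/-- descent lemma -/
lemma descent_lemma {f : E → ℝ} {L : ℝ} (hL : 0 < L)
    (hdiff : Differentiable ℝ f)
    (hlip : ∀ x y, ‖gradient f x - gradient f y‖ ≤ L * ‖x - y‖) (a b : E) :
    f b ≤ f a + ⟪gradient f a, b - a⟫ + L / 2 * ‖b - a‖ ^ 2 := by
  set v := b - a with hv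
  set G : ℝ → ℝ := fun t => ⟪gradient f (a + t • v), v⟫ with hG
  have hcont_grad : Continuous (gradient f) := by
    have : LipschitzWith (Real.toNNReal L) (gradient f) := by
      apply LipschitzWith.of_dist_le_mul
      intro x y
      rw [dist_eq_norm, dist_eq_norm]
      simpa [Real.coe_toNNReal L hL.le] using hlip x y
    exact this.continuous
  have hGcont : Continuous G := by
    apply Continuous.inner
    · exact hcont_grad.comp (by continuity)
    · exact continuous_const
  have hFTC : ∫ t in (0:ℝ)..1, G t = f b - f a := by
    have := intervalIntegral.integral_eq_sub_of_hasDerivAt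
      (f := fun s : ℝ => f (a + s • v)) (f' := G)
      (fun t _ => line_hasDerivAt hdiff a v t) (hGcont.intervalIntegrable 0 1)
    simpa [hv] using this
  have hbound : ∀ t ∈ Set.Icc (0:ℝ) 1, G t ≤ G 0 + (L * ‖v‖ ^ 2) * t := by
    intro t ht
    have h1 : G t - G 0 = ⟪gradient f (a + t • v) - gradient f (a + (0:ℝ) • v), v⟫ := by
      rw [inner_sub_left]
    have h2 : ⟪gradient f (a + t • v) - gradient f (a + (0:ℝ) • v), v⟫ ≤
        ‖gradient f (a + t • v) - gradient f (a + (0:ℝ) • v)‖ * ‖v‖ :=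
      real_inner_le_norm _ _
    have h3 : ‖gradient f (a + t • v) - gradient f (a + (0:ℝ) • v)‖ ≤ L * (t * ‖v‖) := by
      have := hlip (a + t • v) (a + (0:ℝ) • v)
      have he : (a + t • v) - (a + (0:ℝ) • v) = t • v := by
        simp
      rw [he] at this
      calc ‖gradient f (a + t • v) - gradient f (a + (0:ℝ) • v)‖ ≤ L * ‖t • v‖ := this
        _ = L * (t * ‖v‖) := by rw [norm_smul, Real.norm_of_nonneg ht.1]
    nlinarith [norm_nonneg v, ht.1, ht.2]
  have hint : ∫ t in (0:ℝ)..1, G t ≤ ∫ t in (0:ℝ)..1, (G 0 + (L * ‖v‖ ^ 2) * t) := by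
    apply intervalIntegral.integral_mono_on (by norm_num)
    · exact hGcont.intervalIntegrable 0 1
    · exact (Continuous.intervalIntegrable (by continuity) 0 1)
    · exact hbound
  have hval : ∫ t in (0:ℝ)..1, (G 0 + (L * ‖v‖ ^ 2) * t) = G 0 + L / 2 * ‖v‖ ^ 2 := by
    rw [intervalIntegral.integral_add (intervalIntegrable_const)
      ((by fun_prop : Continuous fun t : ℝ => L * ‖v‖ ^ 2 * t).intervalIntegrable 0 1)]
    rw [intervalIntegral.integral_const_mul, integral_id, intervalIntegral.integral_const]
    norm_num
    ring
  have hG0 : G 0 = ⟪gradient f a, b - a⟫ := by simp [hG, hv]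
  rw [hval, hG0] at hint
  rw [hFTC] at hint
  linarith

/-- interpolation / cocoercivity inequality -/
lemma interp_ineq {f : E → ℝ} {L : ℝ} (hL : 0 < L)
    (hconv : ConvexOn ℝ Set.univ f) (hdiff : Differentiable ℝ f)
    (hlip : ∀ x y, ‖gradient f x - gradient f y‖ ≤ L * ‖x - y‖) (a b : E) :
    f a + ⟪gradient f a, b - a⟫ + 1 / (2 * L) * ‖gradient f b - gradient f a‖ ^ 2 ≤ f b := by
  set ga := gradient f a
  set gb := gradient f b
  set w := b - (1 / L) • (gb - ga) with hw
  have hdesc : f w ≤ f b + ⟪gb, w - b⟫ + L / 2 * ‖w - b‖ ^ 2 :=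
    descent_lemma hL hdiff hlip b w
  have hcvx : f a + ⟪ga, w - a⟫ ≤ f w := convex_grad_lower hconv hdiff a w
  have h1 : w - b = -((1 / L) • (gb - ga)) := by rw [hw]; abel
  have h2 : ⟪gb, w - b⟫ = -(1/L) * ⟪gb, gb - ga⟫ := by
    rw [h1, inner_neg_right, real_inner_smul_right]; ring
  have h3 : ‖w - b‖ ^ 2 = (1/L)^2 * ‖gb - ga‖^2 := by
    rw [h1, norm_neg, norm_smul, mul_pow]
    rw [Real.norm_eq_abs, abs_of_pos (by positivity : (0:ℝ) < 1/L)]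
  have h4 : ⟪ga, w - a⟫ = ⟪ga, b - a⟫ - (1/L) * ⟪ga, gb - ga⟫ := by
    have : w - a = (b - a) - (1/L) • (gb - ga) := by rw [hw]; abel
    rw [this, inner_sub_right, real_inner_smul_right]
  have h5 : ⟪gb, gb - ga⟫ - ⟪ga, gb - ga⟫ = ‖gb - ga‖^2 := by
    rw [← inner_sub_left, real_inner_self_eq_norm_sq]
  have hmain := hcvx.trans hdesc
  rw [h2, h3, h4] at hmain
  have h6 : (1/L) * ⟪gb, gb - ga⟫ - (1/L) * ⟪ga, gb - ga⟫ = 1/L * ‖gb - ga‖^2 := by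
    rw [← mul_sub, h5]
  have h7 : 1/L * ‖gb - ga‖^2 - L/2 * ((1/L)^2 * ‖gb - ga‖^2) = 1/(2*L) * ‖gb - ga‖^2 := by
    field_simp
    ring
  linarith

open RealInnerProductSpace Finset in
theorem gradient_method_bound
    {d : ℕ} (f : EuclideanSpace ℝ (Fin d) → ℝ) (L h : ℝ) (N : ℕ)
    (hL : 0 < L) (hh0 : 0 < h) (hh1 : h ≤ 1)
    (hconv : ConvexOn ℝ Set.univ f)
    (hdiff : Differentiable ℝ f)
    (hlip : ∀ x y, ‖gradient f x - gradient f y‖ ≤ L * ‖x - y‖)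
    (xstar : EuclideanSpace ℝ (Fin d)) (hmin : ∀ y, f xstar ≤ f y)
    (x : ℕ → EuclideanSpace ℝ (Fin d))
    (hrec : ∀ i, i < N → x (i + 1) = x i - (h / L) • gradient f (x i)) :
    f (x N) - f xstar ≤ L * ‖x 0 - xstar‖ ^ 2 / (4 * N * h + 2) := by
  set g : ℕ → EuclideanSpace ℝ (Fin d) := fun i => gradient f (x i) with hg
  set u : ℕ → EuclideanSpace ℝ (Fin d) := fun i => x i - xstar with hu'
  set δ : ℕ → ℝ := fun i => f (x i) - f xstar with hδ
  have hgstar : gradient f xstar = 0 := by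
    have hloc : IsLocalMin f xstar := Filter.Eventually.of_forall hmin
    have hfd : fderiv ℝ f xstar = 0 := hloc.fderiv_eq_zero
    rw [gradient, hfd, map_zero]
  have hF : ∀ i, δ i ≤ ⟪g i, u i⟫ - 1/(2*L) * ‖g i‖^2 := by
    intro i
    have hi := interp_ineq hL hconv hdiff hlip (x i) xstar
    rw [hgstar] at hi
    have h1 : ‖(0:EuclideanSpace ℝ (Fin d)) - gradient f (x i)‖ = ‖g i‖ := by
      rw [zero_sub, norm_neg]
    rw [h1] at hi
    have h2 : ⟪gradient f (x i), xstar - x i⟫ = -⟪g i, u i⟫ := by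
      rw [show xstar - x i = -(x i - xstar) by abel, inner_neg_right]
    rw [h2] at hi
    simp only [hδ, hg, hu']
    linarith
  have hE : ∀ i, i < N → δ (i+1) ≤ δ i - h/L * ⟪g (i+1), g i⟫ - 1/(2*L) * ‖g (i+1) - g i‖^2 := by
    intro i hi
    have hint := interp_ineq hL hconv hdiff hlip (x (i+1)) (x i)
    have hstep : x i - x (i+1) = (h/L) • g i := by
      rw [hrec i hi]; abel
    rw [hstep, real_inner_smul_right] at hint
    have hsymm : ‖gradient f (x i) - gradient f (x (i+1))‖ = ‖g (i+1) - g i‖ := by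
      rw [norm_sub_rev]
    rw [hsymm] at hint
    simp only [hδ, hg]
    linarith
  have huQ : ∀ k, k < N → u (k+1) = u 0 - (h/L) • Qv g k := by
    intro k
    induction k with
    | zero =>
      intro h0
      have : u 1 = u 0 - (h/L) • g 0 := by
        simp only [hu']; rw [hrec 0 h0]; abel
      rw [this, show Qv g 0 = g 0 from by simp [Qv]]
    | succ n ih =>
      intro hn1
      have hn : n < N := by omega
      have h1 : u (n+2) = u (n+1) - (h/L) • g (n+1) := by
        simp only [hu']; rw [hrec (n+1) hn1]; abel
      rw [h1, ih hn, show Qv g (n+1) = Qv g n + g (n+1) from by simp [Qv, Finset.sum_range_succ],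
        smul_add]
      abel
  rcases Nat.eq_zero_or_pos N with hN0 | hNpos
  · subst hN0
    have hF0 := hF 0
    have hC := real_inner_le_norm (g 0) (u 0)
    have hpos : (0:ℝ) < 4 * (0:ℕ) * h + 2 := by norm_num
    rw [le_div_iff₀ (by norm_num : (0:ℝ) < 4 * ((0:ℕ):ℝ) * h + 2)]
    have hn1 : (0:ℝ) ≤ ‖g 0‖ := norm_nonneg _
    have hn2 : (0:ℝ) ≤ ‖u 0‖ := norm_nonneg _
    have hF0'' : 2*L*δ 0 ≤ 2*L*⟪g 0, u 0⟫ - ‖g 0‖^2 := by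
      have h2L : (0:ℝ) < 2*L := by linarith
      calc 2*L*δ 0 ≤ 2*L*(⟪g 0, u 0⟫ - 1/(2*L)*‖g 0‖^2) :=
            mul_le_mul_of_nonneg_left hF0 h2L.le
        _ = 2*L*⟪g 0, u 0⟫ - ‖g 0‖^2 := by field_simp
    have key : δ 0 * (4 * ((0:ℕ):ℝ) * h + 2) ≤ L * ‖u 0‖^2 := by
      push_cast
      nlinarith [hF0'', mul_le_mul_of_nonneg_left hC (by linarith : (0:ℝ) ≤ 2*L),
        sq_nonneg (‖g 0‖ - L * ‖u 0‖), hL]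
    exact key
  · have hcert := cert hL hh0 hh1 hNpos δ g u huQ hE (fun i _ => hF i)
    rw [le_div_iff₀ (by positivity : (0:ℝ) < 4 * (N:ℝ) * h + 2)]
    nlinarith [hcert]
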